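/- Let n ≥ 2 and 𝐚 = (a₁,a₂) ∈ [1,∞)². Then the one-parameter bilinear maximal operator 𝔐̃^𝐚 is not bounded from L¹(ℝⁿ) × L^∞(ℝⁿ) to L¹(ℝⁿ), and it is not bounded from L^∞(ℝⁿ) × L¹(ℝⁿ) to L¹(ℝⁿ); that is, there is no constant C with ‖𝔐̃^𝐚(f,g)‖_{L¹} ≤ C‖f‖_{L¹}‖g‖_{L^∞} for all f ∈ L¹, g ∈ L^∞, and likewise with the roles of the two L-spaces interchanged. -/

import Mathlib

open MeasureTheory Metric Set
open scoped ENNReal NNReal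

noncomputable section
set_option maxHeartbeats 1000000
set_option synthInstance.maxHeartbeats 1000000

abbrev Rn (n : ℕ) : Type := EuclideanSpace ℝ (Fin n)

/-- `L^r` quasi-norm (in `ℝ≥0∞`) of an `ℝ≥0∞`-valued function. -/
def lpNormE {α : Type*} [MeasurableSpace α] (μ : Measure α) (F : α → ℝ≥0∞) (r : ℝ≥0∞) : ℝ≥0∞ :=
  if r = 0 then 0 else if r = ∞ then essSup F μ
  else (∫⁻ x, F x ^ r.toReal ∂μ) ^ (1 / r.toReal)

/-- The degenerate surface `S₂^𝐚 = {(y,z) : |y|^{a₁} + |z|^{a₂} = 1} ⊆ ℝⁿ × ℝⁿ`. -/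
def S2 (n : ℕ) (a₁ a₂ : ℝ) : Set (Rn n × Rn n) := {p | ‖p.1‖ ^ a₁ + ‖p.2‖ ^ a₂ = 1}

/-- The normalized surface measure on `S₂^𝐚`, realized as the normalized
`(2n-1)`-dimensional Hausdorff measure restricted to the surface. -/
def μS2 (n : ℕ) (a₁ a₂ : ℝ) : Measure (Rn n × Rn n) :=
  (μH[(2 * (n : ℝ) - 1)] (S2 n a₁ a₂))⁻¹ • (μH[(2 * (n : ℝ) - 1)]).restrict (S2 n a₁ a₂)

/-- The biparametric bilinear average `𝒜^𝐚_{(t₁,t₂)}(f,g)(x)`. -/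
def biAvg (n : ℕ) (a₁ a₂ : ℝ) (f g : Rn n → ℝ) (t₁ t₂ : ℝ) (x : Rn n) : ℝ :=
  ∫ p, f (x - t₁ • p.1) * g (x - t₂ • p.2) ∂(μS2 n a₁ a₂)

/-- The biparametric bilinear maximal function `𝔐^𝐚(f,g)`. -/
def biMax (n : ℕ) (a₁ a₂ : ℝ) (f g : Rn n → ℝ) (x : Rn n) : ℝ≥0∞ :=
  ⨆ t₁ ∈ Ioi (0 : ℝ), ⨆ t₂ ∈ Ioi (0 : ℝ), ENNReal.ofReal |biAvg n a₁ a₂ f g t₁ t₂ x|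

/-- The one-parameter bilinear maximal function `𝔐̃^𝐚(f,g)(x) = sup_{t>0} |𝒜^𝐚_{(t,t)}(f,g)(x)|`. -/
def biMaxOne (n : ℕ) (a₁ a₂ : ℝ) (f g : Rn n → ℝ) (x : Rn n) : ℝ≥0∞ :=
  ⨆ t ∈ Ioi (0 : ℝ), ENNReal.ofReal |biAvg n a₁ a₂ f g t t x|



lemma coord_abs_le_norm {k : ℕ} (x : EuclideanSpace ℝ (Fin k)) (i : Fin k) : |x i| ≤ ‖x‖ := by
  rw [EuclideanSpace.norm_eq, ← Real.sqrt_sq_eq_abs]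
  apply Real.sqrt_le_sqrt
  calc x i ^2 = ‖x i‖^2 := by rw [Real.norm_eq_abs, sq_abs]
  _ ≤ ∑ j, ‖x j‖^2 :=
    Finset.single_le_sum (f := fun j => ‖x j‖^2) (fun j _ => by positivity) (Finset.mem_univ i)

lemma norm_le_sqrt_mul {k : ℕ} (x : EuclideanSpace ℝ (Fin k)) (b : ℝ) (hb : 0 ≤ b)
    (h : ∀ i, |x i| ≤ b) : ‖x‖ ≤ Real.sqrt k * b := by
  rw [EuclideanSpace.norm_eq]
  have h1 : ∀ i, ‖x i‖^2 ≤ b^2 := by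
    intro i; rw [Real.norm_eq_abs]
    have := h i; nlinarith [abs_nonneg (x i)]
  calc √(∑ i, ‖x i‖^2) ≤ √(∑ _i : Fin k, b^2) :=
        Real.sqrt_le_sqrt (Finset.sum_le_sum (fun i _ => h1 i))
  _ = √((k:ℝ) * b^2) := by rw [Finset.sum_const]; simp
  _ = √(k:ℝ) * b := by rw [Real.sqrt_mul (by positivity), Real.sqrt_sq hb]

/-- projection dropping the last coordinate of the second factor -/
def capProj (m : ℕ) : (Rn (m+1) × Rn (m+1)) → ((Fin (m+1) ⊕ Fin m) → ℝ) :=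
  fun p => Sum.elim (fun j => p.1 j) (fun j => p.2 j.castSucc)

lemma capProj_lipschitz (m : ℕ) : LipschitzWith 1 (capProj m) := by
  apply LipschitzWith.of_dist_le_mul
  intro p q
  rw [NNReal.coe_one, one_mul]
  apply (dist_pi_le_iff dist_nonneg).2
  intro b
  have h1 : dist p.1 q.1 ≤ dist p q := le_max_left _ _
  have h2 : dist p.2 q.2 ≤ dist p q := le_max_right _ _
  cases b with
  | inl j =>
    simp only [capProj, Sum.elim_inl, Real.dist_eq]
    calc |p.1 j - q.1 j| ≤ ‖p.1 - q.1‖ := by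
          have := coord_abs_le_norm (p.1 - q.1) j
          simpa using this
    _ = dist p.1 q.1 := (dist_eq_norm _ _).symm
    _ ≤ dist p q := h1
  | inr j =>
    simp only [capProj, Sum.elim_inr, Real.dist_eq]
    calc |p.2 j.castSucc - q.2 j.castSucc| ≤ ‖p.2 - q.2‖ := by
          have := coord_abs_le_norm (p.2 - q.2) j.castSucc
          simpa using this
    _ = dist p.2 q.2 := (dist_eq_norm _ _).symm
    _ ≤ dist p q := h2

lemma cap_lower (m : ℕ) {a₁ a₂ : ℝ} (ha₁ : 1 ≤ a₁) (ha₂ : 1 ≤ a₂) :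
    ∃ c : ℝ, 0 < c ∧ ∀ v : Rn (m+1), ‖v‖ ≤ 1/2 → ∀ δ : ℝ, 0 < δ → δ ≤ 1/4 →
      ENNReal.ofReal (c * δ ^ (m+1)) ≤
        μH[2 * (((m+1) : ℕ) : ℝ) - 1]
          {p : Rn (m+1) × Rn (m+1) | p ∈ S2 (m+1) a₁ a₂ ∧ ‖p.1 - v‖ ≤ δ} := by
  have ha₁0 : (0:ℝ) ≤ a₁ := le_trans zero_le_one ha₁
  have ha₂0 : (0:ℝ) ≤ a₂ := le_trans zero_le_one ha₂
  set sq := Real.sqrt (((m+1):ℕ):ℝ) with hsqdef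
  have hsqpos : 0 < sq := Real.sqrt_pos.2 (by positivity)
  have hsqsq : sq^2 = ((m:ℝ)+1) := by
    rw [hsqdef, Real.sq_sqrt (by positivity)]; push_cast; ring
  set β := 1/(8*sq) with hβdef
  have hβpos : 0 < β := by positivity
  refine ⟨(2/sq)^(m+1) * (2*β)^m, by positivity, ?_⟩
  intro v hv δ hδ hδ'
  set s := δ / sq with hsdef
  have hspos : 0 < s := div_pos hδ hsqpos
  set I : (Fin (m+1) ⊕ Fin m) → Set ℝ :=
    Sum.elim (fun j => Ioo (v j - s) (v j + s)) (fun _ => Ioo (-β) β) with hIdef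
  set cap := {p : Rn (m+1) × Rn (m+1) | p ∈ S2 (m+1) a₁ a₂ ∧ ‖p.1 - v‖ ≤ δ} with hcapdef
  have hsubset : univ.pi I ⊆ capProj m '' cap := by
    intro u hu
    rw [mem_univ_pi] at hu
    set y : Rn (m+1) := (WithLp.equiv 2 _).symm (fun j => u (Sum.inl j)) with hydef
    have hyj : ∀ j, y j = u (Sum.inl j) := fun j => rfl
    have hyv : ‖y - v‖ ≤ δ := by
      have hcoord : ∀ j, |(y - v) j| ≤ s := by
        intro j
        have h := hu (Sum.inl j)
        simp only [hIdef, Sum.elim_inl, mem_Ioo] at h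
        have he : (y - v) j = u (Sum.inl j) - v j := by simp [hyj]
        rw [he, abs_le]
        constructor <;> [linarith [h.1]; linarith [h.2]]
      calc ‖y - v‖ ≤ sq * s := norm_le_sqrt_mul _ s hspos.le hcoord
      _ = δ := by rw [hsdef]; field_simp
    have hynorm : ‖y‖ ≤ 3/4 := by
      calc ‖y‖ = ‖v + (y - v)‖ := by rw [show v + (y - v) = y by abel]
      _ ≤ ‖v‖ + ‖y - v‖ := norm_add_le _ _
      _ ≤ 1/2 + 1/4 := add_le_add hv (le_trans hyv hδ')
      _ = 3/4 := by norm_num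
    have hypow : ‖y‖ ^ a₁ ≤ 3/4 := by
      calc ‖y‖ ^ a₁ ≤ (3/4 : ℝ) ^ a₁ := Real.rpow_le_rpow (norm_nonneg _) hynorm ha₁0
      _ ≤ (3/4 : ℝ) ^ (1:ℝ) := Real.rpow_le_rpow_of_exponent_ge (by norm_num) (by norm_num) ha₁
      _ = 3/4 := Real.rpow_one _
    have hbase0 : (0:ℝ) ≤ 1 - ‖y‖ ^ a₁ := by linarith
    have hbase4 : (1/4 : ℝ) ≤ 1 - ‖y‖ ^ a₁ := by linarith
    set ρ := (1 - ‖y‖ ^ a₁) ^ (1/a₂) with hρdef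
    have hρ0 : 0 ≤ ρ := Real.rpow_nonneg hbase0 _
    have hρ4 : (1/4 : ℝ) ≤ ρ := by
      calc (1/4 : ℝ) = (1/4 : ℝ) ^ (1:ℝ) := (Real.rpow_one _).symm
      _ ≤ (1/4 : ℝ) ^ (1/a₂) := by
          apply Real.rpow_le_rpow_of_exponent_ge (by norm_num) (by norm_num)
          rw [div_le_one (by linarith)]; exact ha₂
      _ ≤ ρ := Real.rpow_le_rpow (by norm_num) hbase4 (by positivity)
    set ζ := ∑ k : Fin m, (u (Sum.inr k))^2 with hζdef
    have hζ0 : 0 ≤ ζ := Finset.sum_nonneg (fun k _ => sq_nonneg _)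
    have hζle : ζ ≤ 1/64 := by
      have hterm : ∀ k : Fin m, (u (Sum.inr k))^2 ≤ β^2 := by
        intro k
        have h := hu (Sum.inr k)
        simp only [hIdef, Sum.elim_inr, mem_Ioo] at h
        have habs : |u (Sum.inr k)| ≤ β := by rw [abs_le]; constructor <;> linarith [h.1, h.2]
        nlinarith [abs_nonneg (u (Sum.inr k))]
      have hβsq : β^2 = 1/(64*((m:ℝ)+1)) := by
        rw [hβdef, div_pow, mul_pow, hsqsq]; norm_num
      calc ζ ≤ ∑ _k : Fin m, β^2 := Finset.sum_le_sum (fun k _ => hterm k)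
      _ = (m:ℝ) * β^2 := by rw [Finset.sum_const]; simp [nsmul_eq_mul]
      _ ≤ ((m:ℝ)+1) * (1/(64*((m:ℝ)+1))) := by
          rw [hβsq]
          apply mul_le_mul (by linarith) le_rfl (by positivity) (by positivity)
      _ = 1/64 := by field_simp
    have hζρ : ζ ≤ ρ^2 := by nlinarith
    set zl := Real.sqrt (ρ^2 - ζ) with hzldef
    set z : Rn (m+1) :=
      (WithLp.equiv 2 _).symm (fun i => Fin.lastCases zl (fun k => u (Sum.inr k)) i) with hzdef
    have hzc : ∀ k : Fin m, z k.castSucc = u (Sum.inr k) := by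
      intro k
      show (Fin.lastCases zl (fun k => u (Sum.inr k)) k.castSucc : ℝ) = _
      rw [Fin.lastCases_castSucc]
    have hzl : z (Fin.last m) = zl := by
      show (Fin.lastCases zl (fun k => u (Sum.inr k)) (Fin.last m) : ℝ) = _
      rw [Fin.lastCases_last]
    have hznorm : ‖z‖ = ρ := by
      rw [EuclideanSpace.norm_eq]
      have hsum : ∑ i, ‖z i‖^2 = ρ^2 := by
        rw [Fin.sum_univ_castSucc]
        have h1 : ∀ k : Fin m, ‖z k.castSucc‖^2 = (u (Sum.inr k))^2 := by
          intro k; rw [Real.norm_eq_abs, sq_abs, hzc]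
        rw [Finset.sum_congr rfl (fun k _ => h1 k), Real.norm_eq_abs, sq_abs, hzl, hzldef,
          Real.sq_sqrt (by linarith)]
        ring
      rw [hsum, Real.sqrt_sq hρ0]
    have hzpow : ‖z‖ ^ a₂ = 1 - ‖y‖ ^ a₁ := by
      rw [hznorm, hρdef, ← Real.rpow_mul hbase0, one_div_mul_cancel (by linarith : a₂ ≠ 0),
        Real.rpow_one]
    refine ⟨(y, z), ⟨?_, ?_⟩, ?_⟩
    · show ‖y‖ ^ a₁ + ‖z‖ ^ a₂ = 1
      rw [hzpow]; ring
    · simpa using hyv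
    · funext i
      cases i with
      | inl j => simp [capProj, hyj]
      | inr k => simp [capProj, hzc]
  have hd0 : (0:ℝ) ≤ 2 * (((m+1) : ℕ) : ℝ) - 1 := by push_cast; linarith
  have hdim : 2 * (((m+1) : ℕ) : ℝ) - 1 = ((Fintype.card (Fin (m+1) ⊕ Fin m) : ℕ) : ℝ) := by
    simp [Fintype.card_sum]; push_cast; ring
  have hvol : volume (univ.pi I) = ENNReal.ofReal ((2/sq)^(m+1) * (2*β)^m * δ^(m+1)) := by
    rw [volume_pi_pi]
    rw [Fintype.prod_sum_type]
    simp only [hIdef, Sum.elim_inl, Sum.elim_inr, Real.volume_Ioo]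
    have h1 : ∀ j : Fin (m+1), (v j + s) - (v j - s) = 2*s := fun j => by ring
    calc (∏ j : Fin (m+1), ENNReal.ofReal ((v j + s) - (v j - s))) *
          ∏ _k : Fin m, ENNReal.ofReal (β - -β)
        = ENNReal.ofReal (2*s)^(m+1) * ENNReal.ofReal (2*β)^m := by
          rw [Finset.prod_congr rfl (fun j _ => by rw [h1 j]), Finset.prod_const,
            Finset.prod_const]
          congr 1 <;> [skip; (congr 1; ring)] <;> simp
    _ = ENNReal.ofReal ((2/sq)^(m+1) * (2*β)^m * δ^(m+1)) := by
          rw [← ENNReal.ofReal_pow (by linarith), ← ENNReal.ofReal_pow (by linarith),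
            ← ENNReal.ofReal_mul (by positivity)]
          congr 1
          rw [hsdef]
          field_simp
          ring
  calc ENNReal.ofReal ((2/sq)^(m+1) * (2*β)^m * δ^(m+1))
      = volume (univ.pi I) := hvol.symm
  _ ≤ volume (capProj m '' cap) := measure_mono hsubset
  _ = μH[((Fintype.card (Fin (m+1) ⊕ Fin m) : ℕ) : ℝ)] (capProj m '' cap) := by
        rw [← hausdorffMeasure_pi_real]
  _ ≤ μH[((Fintype.card (Fin (m+1) ⊕ Fin m) : ℕ) : ℝ)] cap := by
        have := (capProj_lipschitz m).hausdorffMeasure_image_le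
          (d := ((Fintype.card (Fin (m+1) ⊕ Fin m) : ℕ) : ℝ)) (by rw [← hdim]; exact hd0) cap
        simpa using this
  _ = μH[2 * (((m+1) : ℕ) : ℝ) - 1] cap := by rw [hdim]

lemma rpow_sub_rpow_le {a M s t : ℝ} (ha : 1 ≤ a) (ht : 0 ≤ t) (hts : t ≤ s) (hsM : s ≤ M) :
    s ^ a - t ^ a ≤ a * M ^ (a - 1) * (s - t) := by
  have hM : 0 ≤ M := le_trans (le_trans ht hts) hsM
  have hf : ∀ x ∈ Icc t s, HasDerivWithinAt (fun x : ℝ => x ^ a)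
      ((fun x => a * x ^ (a-1)) x) (Icc t s) x :=
    fun x _ => (Real.hasDerivAt_rpow_const (Or.inr ha)).hasDerivWithinAt
  have hbound : ∀ x ∈ Ico t s, ‖a * x ^ (a-1)‖ ≤ a * M ^ (a-1) := by
    intro x hx
    have hx0 : 0 ≤ x := le_trans ht hx.1
    have ha0 : (0:ℝ) ≤ a := le_trans zero_le_one ha
    rw [Real.norm_eq_abs, abs_of_nonneg (by positivity)]
    have h1 : x ^ (a-1) ≤ M ^ (a-1) :=
      Real.rpow_le_rpow hx0 (le_trans hx.2.le hsM) (by linarith)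
    exact mul_le_mul_of_nonneg_left h1 ha0
  have key := norm_image_sub_le_of_norm_deriv_le_segment' hf hbound s (right_mem_Icc.2 hts)
  rw [Real.norm_eq_abs] at key
  have h2 : t ^ a ≤ s ^ a := Real.rpow_le_rpow ht hts (by linarith)
  calc s^a - t^a = |s^a - t^a| := (abs_of_nonneg (by linarith)).symm
  _ ≤ a * M^(a-1) * (s - t) := key

lemma rpow_dist_le {a M s t : ℝ} (ha : 1 ≤ a) (hs : 0 ≤ s) (ht : 0 ≤ t) (hsM : s ≤ M)
    (htM : t ≤ M) : |s^a - t^a| ≤ a * M^(a-1) * |s - t| := by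
  have hM : 0 ≤ M := le_trans ht htM
  have hC : 0 ≤ a * M^(a-1) := by positivity
  rcases le_total t s with h | h
  · rw [abs_of_nonneg (by nlinarith [Real.rpow_le_rpow ht h (le_trans zero_le_one ha)] :
      (0:ℝ) ≤ s^a - t^a), abs_of_nonneg (by linarith)]
    exact rpow_sub_rpow_le ha ht h hsM
  · rw [abs_sub_comm, abs_sub_comm s t,
      abs_of_nonneg (by nlinarith [Real.rpow_le_rpow hs h (le_trans zero_le_one ha)] :
        (0:ℝ) ≤ t^a - s^a), abs_of_nonneg (by linarith)]
    exact rpow_sub_rpow_le ha hs h htM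

lemma rpow_sub_rpow_ge {a r₀ s t : ℝ} (ha : 1 ≤ a) (hr₀ : 0 < r₀) (ht : r₀ ≤ t) (hts : t ≤ s) :
    r₀ ^ (a-1) * (s - t) ≤ s ^ a - t ^ a := by
  have ht0 : 0 < t := lt_of_lt_of_le hr₀ ht
  have hs0 : 0 < s := lt_of_lt_of_le ht0 hts
  have hss : s^(a-1) * s = s^a := by
    rw [← Real.rpow_add_one hs0.ne' (a-1)]; ring_nf
  have htt : t^(a-1) * t = t^a := by
    rw [← Real.rpow_add_one ht0.ne' (a-1)]; ring_nf
  have h1 : t^(a-1) ≤ s^(a-1) := Real.rpow_le_rpow ht0.le hts (by linarith)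
  have h2 : r₀^(a-1) ≤ t^(a-1) := Real.rpow_le_rpow hr₀.le ht (by linarith)
  have h3 : (0:ℝ) < t^(a-1) := Real.rpow_pos_of_pos ht0 _
  nlinarith [sub_nonneg.2 hts]

def gS (m : ℕ) (a₁ a₂ : ℝ) (w : Rn (m+1) × Rn (m+1)) (r : ℝ) : ℝ :=
  (r * ‖w.1‖) ^ a₁ + (r * ‖w.2‖) ^ a₂

def NB (m : ℕ) : ℝ := Real.sqrt (((m+1):ℕ):ℝ)

def rlo (m : ℕ) : ℝ := 1/(4 * NB m)

def KS (m : ℕ) : Set (Rn (m+1) × Rn (m+1)) :=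
  {w | 1 ≤ max ‖w.1‖ ‖w.2‖ ∧ ‖w.1‖ ≤ NB m ∧ ‖w.2‖ ≤ NB m}

lemma NB_pos (m : ℕ) : 0 < NB m := Real.sqrt_pos.2 (by positivity)

lemma one_le_NB (m : ℕ) : 1 ≤ NB m := by
  rw [NB, show (1:ℝ) = Real.sqrt 1 by simp]
  exact Real.sqrt_le_sqrt (by push_cast; linarith)

lemma rlo_pos (m : ℕ) : 0 < rlo m := by
  have := NB_pos m; rw [rlo]; positivity

lemma rlo_le_one (m : ℕ) : rlo m ≤ 1 := by
  rw [rlo]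
  rw [div_le_one (by have := NB_pos m; linarith)]
  have := one_le_NB m; linarith

section G
variable {m : ℕ} {a₁ a₂ : ℝ} (ha₁ : 1 ≤ a₁) (ha₂ : 1 ≤ a₂)

include ha₁ ha₂ in
lemma gS_cont (w : Rn (m+1) × Rn (m+1)) : Continuous (gS m a₁ a₂ w) := by
  have h1 : Continuous fun r : ℝ => (r * ‖w.1‖) ^ a₁ :=
    (Real.continuous_rpow_const (le_trans zero_le_one ha₁)).comp (continuous_mul_right _)
  have h2 : Continuous fun r : ℝ => (r * ‖w.2‖) ^ a₂ :=
    (Real.continuous_rpow_const (le_trans zero_le_one ha₂)).comp (continuous_mul_right _)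
  exact h1.add h2

include ha₁ ha₂ in
/-- `gS` is small for small `r`. -/
lemma gS_le_half {w : Rn (m+1) × Rn (m+1)} (hw1 : ‖w.1‖ ≤ NB m) (hw2 : ‖w.2‖ ≤ NB m)
    {r : ℝ} (hr : 0 ≤ r) (hr' : r * NB m ≤ 1/4) : gS m a₁ a₂ w r ≤ 1/2 := by
  have hterm : ∀ (a c : ℝ), 1 ≤ a → 0 ≤ c → c ≤ NB m → (r * c) ^ a ≤ 1/4 := by
    intro a c ha hc hcN
    have h1 : r * c ≤ 1/4 := by nlinarith [NB_pos m]
    calc (r * c) ^ a ≤ (1/4 : ℝ) ^ a :=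
          Real.rpow_le_rpow (by positivity) h1 (le_trans zero_le_one ha)
    _ ≤ (1/4 : ℝ) ^ (1:ℝ) := Real.rpow_le_rpow_of_exponent_ge (by norm_num) (by norm_num) ha
    _ = 1/4 := Real.rpow_one _
  have := hterm a₁ ‖w.1‖ ha₁ (norm_nonneg _) hw1
  have := hterm a₂ ‖w.2‖ ha₂ (norm_nonneg _) hw2
  rw [gS]; linarith

include ha₁ ha₂ in
lemma gS_one_ge {w : Rn (m+1) × Rn (m+1)} (hw : 1 ≤ max ‖w.1‖ ‖w.2‖) :
    1 ≤ gS m a₁ a₂ w 1 := by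
  rw [gS, one_mul, one_mul]
  have h1 : (0:ℝ) ≤ ‖w.1‖ ^ a₁ := Real.rpow_nonneg (norm_nonneg _) _
  have h2 : (0:ℝ) ≤ ‖w.2‖ ^ a₂ := Real.rpow_nonneg (norm_nonneg _) _
  rcases le_max_iff.1 hw with h | h
  · have := Real.one_le_rpow h (le_trans zero_le_one ha₁); linarith
  · have := Real.one_le_rpow h (le_trans zero_le_one ha₂); linarith

include ha₁ ha₂ in
/-- quantitative strict monotonicity of `gS` in `r`. -/
lemma gS_mono_r {w : Rn (m+1) × Rn (m+1)} (hw : 1 ≤ max ‖w.1‖ ‖w.2‖)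
    {r r' : ℝ} (hr : rlo m ≤ r) (hr1 : r' ≤ 1) (hrr : r ≤ r') :
    min ((rlo m)^(a₁-1)) ((rlo m)^(a₂-1)) * (r' - r) ≤ gS m a₁ a₂ w r' - gS m a₁ a₂ w r := by
  set c := min ((rlo m)^(a₁-1)) ((rlo m)^(a₂-1)) with hc
  have hrpos : 0 < r := lt_of_lt_of_le (rlo_pos m) hr
  have hbig : ∀ (a b : ℝ), 1 ≤ a → (1:ℝ) ≤ b →
      (rlo m)^(a-1) * (r' - r) ≤ (r' * b) ^ a - (r * b) ^ a := by
    intro a b ha hb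
    have h1 : rlo m ≤ r * b := by nlinarith [rlo_pos m]
    have h2 : r * b ≤ r' * b := by nlinarith
    have h3 := rpow_sub_rpow_ge ha (rlo_pos m) h1 h2
    have h4 : (0:ℝ) < (rlo m)^(a-1) := Real.rpow_pos_of_pos (rlo_pos m) _
    nlinarith [sub_nonneg.2 hrr,
      mul_nonneg (mul_nonneg h4.le (sub_nonneg.2 hrr)) (sub_nonneg.2 hb)]
  have hmono : ∀ (a b : ℝ), 1 ≤ a → (0:ℝ) ≤ b → (r * b) ^ a ≤ (r' * b) ^ a := by
    intro a b ha hb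
    exact Real.rpow_le_rpow (by positivity) (by nlinarith) (le_trans zero_le_one ha)
  rcases le_max_iff.1 hw with h | h
  · have := hbig a₁ ‖w.1‖ ha₁ h
    have := hmono a₂ ‖w.2‖ ha₂ (norm_nonneg _)
    have hcle : c ≤ (rlo m)^(a₁-1) := min_le_left _ _
    rw [gS, gS]
    nlinarith [sub_nonneg.2 hrr]
  · have := hbig a₂ ‖w.2‖ ha₂ h
    have := hmono a₁ ‖w.1‖ ha₁ (norm_nonneg _)
    have hcle : c ≤ (rlo m)^(a₂-1) := min_le_right _ _
    rw [gS, gS]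
    nlinarith [sub_nonneg.2 hrr]

include ha₁ ha₂ in
/-- Lipschitz dependence of `gS` on `w`. -/
lemma gS_lip_w {w w' : Rn (m+1) × Rn (m+1)} (hw : ‖w.1‖ ≤ NB m) (hw2 : ‖w.2‖ ≤ NB m)
    (hw' : ‖w'.1‖ ≤ NB m) (hw2' : ‖w'.2‖ ≤ NB m) {r : ℝ} (hr : 0 ≤ r) (hr1 : r ≤ 1) :
    |gS m a₁ a₂ w r - gS m a₁ a₂ w' r| ≤
      (a₁ * (NB m)^(a₁-1) + a₂ * (NB m)^(a₂-1)) * dist w w' := by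
  have hd1 : dist w.1 w'.1 ≤ dist w w' := le_max_left _ _
  have hd2 : dist w.2 w'.2 ≤ dist w w' := le_max_right _ _
  have key : ∀ (a : ℝ), 1 ≤ a → ∀ c c' : ℝ, 0 ≤ c → 0 ≤ c' → c ≤ NB m → c' ≤ NB m →
      |c - c'| ≤ dist w w' → |(r*c)^a - (r*c')^a| ≤ a * (NB m)^(a-1) * dist w w' := by
    intro a ha c c' hc hc' hcN hc'N hcc
    have h1 : r * c ≤ NB m := by nlinarith [NB_pos m]
    have h2 : r * c' ≤ NB m := by nlinarith [NB_pos m]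
    have h3 := rpow_dist_le ha (by positivity) (by positivity) h1 h2
    have h4 : |r*c - r*c'| ≤ dist w w' := by
      rw [← mul_sub, abs_mul, abs_of_nonneg hr]
      calc r * |c - c'| ≤ 1 * |c - c'| := by
            apply mul_le_mul_of_nonneg_right hr1 (abs_nonneg _)
      _ ≤ dist w w' := by rw [one_mul]; exact hcc
    have h5 : (0:ℝ) ≤ a * (NB m)^(a-1) := by
      have := Real.rpow_nonneg (NB_pos m).le (a-1); nlinarith
    calc |(r*c)^a - (r*c')^a| ≤ a * (NB m)^(a-1) * |r*c - r*c'| := h3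
    _ ≤ a * (NB m)^(a-1) * dist w w' := mul_le_mul_of_nonneg_left h4 h5
  have hn1 : |‖w.1‖ - ‖w'.1‖| ≤ dist w w' :=
    le_trans (le_trans (abs_norm_sub_norm_le _ _) (dist_eq_norm _ _).ge) hd1
  have hn2 : |‖w.2‖ - ‖w'.2‖| ≤ dist w w' :=
    le_trans (le_trans (abs_norm_sub_norm_le _ _) (dist_eq_norm _ _).ge) hd2
  have k1 := key a₁ ha₁ ‖w.1‖ ‖w'.1‖ (norm_nonneg _) (norm_nonneg _) hw hw' hn1
  have k2 := key a₂ ha₂ ‖w.2‖ ‖w'.2‖ (norm_nonneg _) (norm_nonneg _) hw2 hw2' hn2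
  rw [gS, gS]
  calc |(r * ‖w.1‖) ^ a₁ + (r * ‖w.2‖) ^ a₂ - ((r * ‖w'.1‖) ^ a₁ + (r * ‖w'.2‖) ^ a₂)|
      ≤ |(r * ‖w.1‖) ^ a₁ - (r * ‖w'.1‖) ^ a₁| + |(r * ‖w.2‖) ^ a₂ - (r * ‖w'.2‖) ^ a₂| := by
        have := abs_add_le ((r * ‖w.1‖) ^ a₁ - (r * ‖w'.1‖) ^ a₁)
          ((r * ‖w.2‖) ^ a₂ - (r * ‖w'.2‖) ^ a₂)
        calc _ = |(r * ‖w.1‖) ^ a₁ - (r * ‖w'.1‖) ^ a₁ +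
              ((r * ‖w.2‖) ^ a₂ - (r * ‖w'.2‖) ^ a₂)| := by ring_nf
        _ ≤ _ := this
  _ ≤ a₁ * (NB m)^(a₁-1) * dist w w' + a₂ * (NB m)^(a₂-1) * dist w w' := add_le_add k1 k2
  _ = (a₁ * (NB m)^(a₁-1) + a₂ * (NB m)^(a₂-1)) * dist w w' := by ring
end G

section G
variable {m : ℕ} {a₁ a₂ : ℝ} (ha₁ : 1 ≤ a₁) (ha₂ : 1 ≤ a₂)
include ha₁ ha₂ in
lemma gS_exists_root {w : Rn (m+1) × Rn (m+1)} (hw : w ∈ KS m) :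
    ∃ r ∈ Icc (rlo m) 1, gS m a₁ a₂ w r = 1 := by
  obtain ⟨hmax, hn1, hn2⟩ := hw
  have h0 : gS m a₁ a₂ w (rlo m) ≤ 1 := by
    have : rlo m * NB m ≤ 1/4 := by
      rw [rlo]; rw [div_mul_eq_mul_div, mul_comm]
      rw [div_le_div_iff₀ (by have := NB_pos m; linarith) (by norm_num)]
      have := NB_pos m; nlinarith
    linarith [gS_le_half ha₁ ha₂ hn1 hn2 (rlo_pos m).le this]
  have h1 : 1 ≤ gS m a₁ a₂ w 1 := gS_one_ge ha₁ ha₂ hmax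
  have := intermediate_value_Icc (rlo_le_one m) (gS_cont ha₁ ha₂ w).continuousOn
  have hmem : (1:ℝ) ∈ Icc (gS m a₁ a₂ w (rlo m)) (gS m a₁ a₂ w 1) := ⟨h0, h1⟩
  obtain ⟨r, hr, hroot⟩ := this hmem
  exact ⟨r, hr, hroot⟩

include ha₁ ha₂ in
lemma gS_root_unique {w : Rn (m+1) × Rn (m+1)} (hw : 1 ≤ max ‖w.1‖ ‖w.2‖)
    {r r' : ℝ} (hr : r ∈ Icc (rlo m) 1) (hr' : r' ∈ Icc (rlo m) 1)
    (h : gS m a₁ a₂ w r = 1) (h' : gS m a₁ a₂ w r' = 1) : r = r' := by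
  have hcpos : 0 < min ((rlo m)^(a₁-1)) ((rlo m)^(a₂-1)) :=
    lt_min (Real.rpow_pos_of_pos (rlo_pos m) _) (Real.rpow_pos_of_pos (rlo_pos m) _)
  rcases lt_trichotomy r r' with hlt | heq | hgt
  · have := gS_mono_r ha₁ ha₂ hw hr.1 hr'.2 hlt.le
    rw [h, h'] at this; nlinarith
  · exact heq
  · have := gS_mono_r ha₁ ha₂ hw hr'.1 hr.2 hgt.le
    rw [h, h'] at this; nlinarith

open Classical in
def radS (m : ℕ) (a₁ a₂ : ℝ) (w : Rn (m+1) × Rn (m+1)) : ℝ :=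
  if h : ∃ r ∈ Icc (rlo m) 1, gS m a₁ a₂ w r = 1 then h.choose else 1

include ha₁ ha₂ in
lemma radS_spec {w : Rn (m+1) × Rn (m+1)} (hw : w ∈ KS m) :
    radS m a₁ a₂ w ∈ Icc (rlo m) 1 ∧ gS m a₁ a₂ w (radS m a₁ a₂ w) = 1 := by
  have h := gS_exists_root ha₁ ha₂ hw
  rw [radS]
  rw [dif_pos h]
  exact ⟨h.choose_spec.1, h.choose_spec.2⟩

include ha₁ ha₂ in
lemma radS_eq {w : Rn (m+1) × Rn (m+1)} (hw : w ∈ KS m) {r : ℝ}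
    (hr : r ∈ Icc (rlo m) 1) (hroot : gS m a₁ a₂ w r = 1) : radS m a₁ a₂ w = r := by
  obtain ⟨h1, h2⟩ := radS_spec ha₁ ha₂ hw
  exact gS_root_unique ha₁ ha₂ hw.1 h1 hr h2 hroot

include ha₁ ha₂ in
lemma radS_lip {w w' : Rn (m+1) × Rn (m+1)} (hw : w ∈ KS m) (hw' : w' ∈ KS m) :
    |radS m a₁ a₂ w - radS m a₁ a₂ w'| ≤
      ((a₁ * (NB m)^(a₁-1) + a₂ * (NB m)^(a₂-1)) / min ((rlo m)^(a₁-1)) ((rlo m)^(a₂-1))) *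
        dist w w' := by
  set cmin := min ((rlo m)^(a₁-1)) ((rlo m)^(a₂-1)) with hcmin
  set L := a₁ * (NB m)^(a₁-1) + a₂ * (NB m)^(a₂-1) with hL
  have hcpos : 0 < cmin :=
    lt_min (Real.rpow_pos_of_pos (rlo_pos m) _) (Real.rpow_pos_of_pos (rlo_pos m) _)
  -- main step, symmetric in w, w'
  have main : ∀ u u' : Rn (m+1) × Rn (m+1), u ∈ KS m → u' ∈ KS m →
      radS m a₁ a₂ u ≤ radS m a₁ a₂ u' →
      radS m a₁ a₂ u' - radS m a₁ a₂ u ≤ (L / cmin) * dist u u' := by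
    intro u u' hu hu' hle
    obtain ⟨hmemu, hroot⟩ := radS_spec ha₁ ha₂ hu
    obtain ⟨hmemu', hroot'⟩ := radS_spec ha₁ ha₂ hu'
    set r := radS m a₁ a₂ u
    set r' := radS m a₁ a₂ u'
    have key : cmin * (r' - r) ≤ gS m a₁ a₂ u r' - gS m a₁ a₂ u r :=
      gS_mono_r ha₁ ha₂ hu.1 hmemu.1 hmemu'.2 hle
    have h2 : gS m a₁ a₂ u r' - gS m a₁ a₂ u r = gS m a₁ a₂ u r' - gS m a₁ a₂ u' r' := by
      rw [hroot, hroot']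
    have h3 : gS m a₁ a₂ u r' - gS m a₁ a₂ u' r' ≤ L * dist u u' := by
      have := gS_lip_w ha₁ ha₂ hu.2.1 hu.2.2 hu'.2.1 hu'.2.2
        (le_trans (rlo_pos m).le hmemu'.1) hmemu'.2
      calc gS m a₁ a₂ u r' - gS m a₁ a₂ u' r' ≤ |gS m a₁ a₂ u r' - gS m a₁ a₂ u' r'| :=
            le_abs_self _
      _ ≤ L * dist u u' := this
    rw [div_mul_eq_mul_div, le_div_iff₀ hcpos]
    nlinarith [key, h2 ▸ key]
  rcases le_total (radS m a₁ a₂ w) (radS m a₁ a₂ w') with h | h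
  · rw [abs_sub_comm, abs_of_nonneg (by linarith)]
    exact main w w' hw hw' h
  · rw [abs_of_nonneg (by linarith)]
    calc radS m a₁ a₂ w - radS m a₁ a₂ w' ≤ (L/cmin) * dist w' w := main w' w hw' hw h
    _ = (L/cmin) * dist w w' := by rw [dist_comm]
end G

section G
variable {m : ℕ} {a₁ a₂ : ℝ} (ha₁ : 1 ≤ a₁) (ha₂ : 1 ≤ a₂)

/-- The Lipschitz constant for the radial map. -/
def LC (m : ℕ) (a₁ a₂ : ℝ) : ℝ :=
  NB m * ((a₁ * (NB m)^(a₁-1) + a₂ * (NB m)^(a₂-1)) / min ((rlo m)^(a₁-1)) ((rlo m)^(a₂-1))) + 1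

include ha₁ ha₂ in
lemma phi_lipschitzOnWith :
    LipschitzOnWith (Real.toNNReal (LC m a₁ a₂)) (fun w => radS m a₁ a₂ w • w) (KS m) := by
  have hLr : (0:ℝ) ≤ (a₁ * (NB m)^(a₁-1) + a₂ * (NB m)^(a₂-1)) /
      min ((rlo m)^(a₁-1)) ((rlo m)^(a₂-1)) := by
    have h1 : (0:ℝ) ≤ a₁ * (NB m)^(a₁-1) := by
      have := Real.rpow_nonneg (NB_pos m).le (a₁-1); nlinarith
    have h2 : (0:ℝ) ≤ a₂ * (NB m)^(a₂-1) := by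
      have := Real.rpow_nonneg (NB_pos m).le (a₂-1); nlinarith
    have h3 : (0:ℝ) < min ((rlo m)^(a₁-1)) ((rlo m)^(a₂-1)) :=
      lt_min (Real.rpow_pos_of_pos (rlo_pos m) _) (Real.rpow_pos_of_pos (rlo_pos m) _)
    positivity
  have hLC0 : 0 ≤ LC m a₁ a₂ := by
    have := NB_pos m; rw [LC]; positivity
  apply LipschitzOnWith.of_dist_le_mul
  intro w hw w' hw'
  rw [Real.coe_toNNReal _ hLC0]
  set r := radS m a₁ a₂ w with hrdef
  set r' := radS m a₁ a₂ w' with hr'def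
  have hsplit : r • w - r' • w' = (r - r') • w + r' • (w - w') := by
    rw [sub_smul, smul_sub]; abel
  have hwn : ‖w‖ ≤ NB m := by
    rw [Prod.norm_def]; exact max_le hw.2.1 hw.2.2
  have hr'1 : |r'| ≤ 1 := by
    obtain ⟨hmem, _⟩ := radS_spec ha₁ ha₂ hw'
    rw [abs_of_nonneg (le_trans (rlo_pos m).le hmem.1)]; exact hmem.2
  have hrr' := radS_lip ha₁ ha₂ hw hw'
  calc dist (r • w) (r' • w') = ‖r • w - r' • w'‖ := dist_eq_norm _ _
  _ = ‖(r - r') • w + r' • (w - w')‖ := by rw [hsplit]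
  _ ≤ ‖(r - r') • w‖ + ‖r' • (w - w')‖ := norm_add_le _ _
  _ = |r - r'| * ‖w‖ + |r'| * ‖w - w'‖ := by rw [norm_smul, norm_smul]; simp [Real.norm_eq_abs]
  _ ≤ (((a₁ * (NB m)^(a₁-1) + a₂ * (NB m)^(a₂-1)) / min ((rlo m)^(a₁-1)) ((rlo m)^(a₂-1))) *
        dist w w') * NB m + 1 * ‖w - w'‖ := by
      apply add_le_add
      · exact mul_le_mul hrr' hwn (norm_nonneg _) (by positivity)
      · exact mul_le_mul_of_nonneg_right hr'1 (norm_nonneg _)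
  _ = LC m a₁ a₂ * dist w w' := by
      rw [← dist_eq_norm, LC]; ring

end G

def Face (m : ℕ) (i : Fin (m+1) ⊕ Fin (m+1)) (ε : ℝ) : Set (Rn (m+1) × Rn (m+1)) :=
  {w | (∀ j, |w.1 j| ≤ 1) ∧ (∀ j, |w.2 j| ≤ 1) ∧
    Sum.elim (fun j => w.1 j) (fun j => w.2 j) i = ε}

lemma Face_subset_KS {m : ℕ} {i : Fin (m+1) ⊕ Fin (m+1)} {ε : ℝ} (hε : |ε| = 1) :
    Face m i ε ⊆ KS m := by
  intro w hw
  obtain ⟨h1, h2, h3⟩ := hw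
  have hn1 : ‖w.1‖ ≤ NB m := by
    have := norm_le_sqrt_mul w.1 1 zero_le_one h1
    rw [mul_one] at this; exact this
  have hn2 : ‖w.2‖ ≤ NB m := by
    have := norm_le_sqrt_mul w.2 1 zero_le_one h2
    rw [mul_one] at this; exact this
  refine ⟨?_, hn1, hn2⟩
  cases i with
  | inl j =>
    have : |w.1 j| = 1 := by rw [show w.1 j = ε from h3, hε]
    calc (1:ℝ) = |w.1 j| := this.symm
    _ ≤ ‖w.1‖ := coord_abs_le_norm _ _
    _ ≤ max ‖w.1‖ ‖w.2‖ := le_max_left _ _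
  | inr j =>
    have : |w.2 j| = 1 := by rw [show w.2 j = ε from h3, hε]
    calc (1:ℝ) = |w.2 j| := this.symm
    _ ≤ ‖w.2‖ := coord_abs_le_norm _ _
    _ ≤ max ‖w.1‖ ‖w.2‖ := le_max_right _ _

/-- parametrization of a `(y j = ε)`-face by a cube in dimension `2m+1` -/
def ψmap (m : ℕ) (j : Fin (m+1)) (ε : ℝ) :
    ((Fin m ⊕ Fin (m+1)) → ℝ) → (Rn (m+1) × Rn (m+1)) :=
  fun u => ((WithLp.equiv 2 _).symm (Fin.insertNth (α := fun _ => ℝ) j ε (fun k => u (Sum.inl k))),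
            (WithLp.equiv 2 _).symm (fun k => u (Sum.inr k)))

lemma ψmap_lip (m : ℕ) (j : Fin (m+1)) (ε : ℝ) :
    LipschitzWith (Real.toNNReal (NB m)) (ψmap m j ε) := by
  apply LipschitzWith.of_dist_le_mul
  intro u u'
  rw [Real.coe_toNNReal _ (NB_pos m).le]
  have hcoord : ∀ i : Fin m ⊕ Fin (m+1), |u i - u' i| ≤ dist u u' := by
    intro i
    have := dist_le_pi_dist u u' i
    rwa [Real.dist_eq] at this
  apply max_le
  · -- first components
    rw [show dist (ψmap m j ε u).1 (ψmap m j ε u').1 = ‖(ψmap m j ε u).1 - (ψmap m j ε u').1‖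
      from dist_eq_norm _ _]
    have : ∀ i : Fin (m+1), |((ψmap m j ε u).1 - (ψmap m j ε u').1) i| ≤ dist u u' := by
      intro i
      have happ : ((ψmap m j ε u).1 - (ψmap m j ε u').1) i
          = (Fin.insertNth (α := fun _ => ℝ) j ε (fun k => u (Sum.inl k))) i
            - (Fin.insertNth (α := fun _ => ℝ) j ε (fun k => u' (Sum.inl k))) i := by
        rw [PiLp.sub_apply]
        rw [show ((ψmap m j ε u).1 : Rn (m+1)) i
          = (Fin.insertNth (α := fun _ => ℝ) j ε (fun k => u (Sum.inl k))) i from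
          rfl]
        rw [show ((ψmap m j ε u').1 : Rn (m+1)) i
          = (Fin.insertNth (α := fun _ => ℝ) j ε (fun k => u' (Sum.inl k))) i from
          rfl]
      rw [happ]
      by_cases hij : i = j
      · subst hij
        rw [Fin.insertNth_apply_same, Fin.insertNth_apply_same, sub_self, abs_zero]
        exact dist_nonneg
      · obtain ⟨k, rfl⟩ := Fin.exists_succAbove_eq hij
        rw [Fin.insertNth_apply_succAbove, Fin.insertNth_apply_succAbove]
        exact hcoord (Sum.inl k)
    calc ‖(ψmap m j ε u).1 - (ψmap m j ε u').1‖ ≤ Real.sqrt ((m+1 : ℕ)) * dist u u' :=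
          norm_le_sqrt_mul _ _ dist_nonneg this
    _ = NB m * dist u u' := by rw [NB]
  · rw [show dist (ψmap m j ε u).2 (ψmap m j ε u').2 = ‖(ψmap m j ε u).2 - (ψmap m j ε u').2‖
      from dist_eq_norm _ _]
    have : ∀ i : Fin (m+1), |((ψmap m j ε u).2 - (ψmap m j ε u').2) i| ≤ dist u u' := by
      intro i
      have happ : ((ψmap m j ε u).2 - (ψmap m j ε u').2) i = u (Sum.inr i) - u' (Sum.inr i) := by
        rw [PiLp.sub_apply]; rfl
      rw [happ]; exact hcoord (Sum.inr i)
    calc ‖(ψmap m j ε u).2 - (ψmap m j ε u').2‖ ≤ Real.sqrt ((m+1 : ℕ)) * dist u u' :=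
          norm_le_sqrt_mul _ _ dist_nonneg this
    _ = NB m * dist u u' := by rw [NB]

lemma Face_inl_subset (m : ℕ) (j : Fin (m+1)) (ε : ℝ) (hε : |ε| ≤ 1) :
    Face m (Sum.inl j) ε ⊆ ψmap m j ε '' (closedBall 0 1) := by
  intro w hw
  obtain ⟨h1, h2, h3⟩ := hw
  simp only [Sum.elim_inl] at h3
  refine ⟨Sum.elim (fun k => w.1 (j.succAbove k)) (fun k => w.2 k), ?_, ?_⟩
  · rw [mem_closedBall]
    apply (dist_pi_le_iff zero_le_one).2
    intro i
    cases i with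
    | inl k =>
      rw [Real.dist_eq]
      simpa using h1 (j.succAbove k)
    | inr k =>
      rw [Real.dist_eq]
      simpa using h2 k
  · rw [ψmap]
    have hfst : Fin.insertNth (α := fun _ => ℝ) j ε (fun k => Sum.elim (fun k => w.1 (j.succAbove k))
        (fun k => w.2 k) (Sum.inl k)) = fun i => w.1 i := by
      simp only [Sum.elim_inl]
      rw [← h3]
      exact Fin.insertNth_self_removeNth j _
    apply Prod.ext
    · show (WithLp.equiv 2 _).symm _ = w.1
      rw [hfst]
      rfl
    · show (WithLp.equiv 2 _).symm _ = w.2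
      rfl

-- the swap isometry
def eSwap (m : ℕ) : (Rn (m+1) × Rn (m+1)) ≃ᵢ (Rn (m+1) × Rn (m+1)) where
  toEquiv := Equiv.prodComm _ _
  isometry_toFun := by
    intro p q
    show edist (p.2, p.1) (q.2, q.1) = edist p q
    rw [Prod.edist_eq, Prod.edist_eq]
    exact max_comm _ _

lemma dim_cast (m : ℕ) : 2 * (((m+1):ℕ):ℝ) - 1 = ((Fintype.card (Fin m ⊕ Fin (m+1)) : ℕ) : ℝ) := by
  simp [Fintype.card_sum]; push_cast; ring

lemma dim_nonneg (m : ℕ) : (0:ℝ) ≤ 2 * (((m+1):ℕ):ℝ) - 1 := by push_cast; linarith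

lemma Face_inl_lt_top (m : ℕ) (j : Fin (m+1)) (ε : ℝ) (hε : |ε| ≤ 1) :
    μH[2 * (((m+1):ℕ):ℝ) - 1] (Face m (Sum.inl j) ε) < ∞ := by
  have hsub := Face_inl_subset m j ε hε
  have hlip := (ψmap_lip m j ε).hausdorffMeasure_image_le (dim_nonneg m)
    (closedBall (0 : (Fin m ⊕ Fin (m+1)) → ℝ) 1)
  have hball : μH[2 * (((m+1):ℕ):ℝ) - 1] (closedBall (0 : (Fin m ⊕ Fin (m+1)) → ℝ) 1) < ∞ := by
    rw [dim_cast m, hausdorffMeasure_pi_real]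
    exact (isCompact_closedBall 0 1).measure_lt_top
  calc μH[2 * (((m+1):ℕ):ℝ) - 1] (Face m (Sum.inl j) ε)
      ≤ μH[2 * (((m+1):ℕ):ℝ) - 1] (ψmap m j ε '' (closedBall 0 1)) := measure_mono hsub
  _ ≤ (Real.toNNReal (NB m) : ℝ≥0∞) ^ (2 * (((m+1):ℕ):ℝ) - 1) *
        μH[2 * (((m+1):ℕ):ℝ) - 1] (closedBall 0 1) := hlip
  _ < ∞ := ENNReal.mul_lt_top (ENNReal.rpow_lt_top_of_nonneg (dim_nonneg m)
        ENNReal.coe_ne_top) hball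

lemma Face_swap (m : ℕ) (j : Fin (m+1)) (ε : ℝ) :
    Face m (Sum.inr j) ε = eSwap m '' (Face m (Sum.inl j) ε) := by
  ext w
  constructor
  · rintro ⟨h1, h2, h3⟩
    refine ⟨(w.2, w.1), ⟨h2, h1, h3⟩, rfl⟩
  · rintro ⟨v, ⟨h1, h2, h3⟩, rfl⟩
    exact ⟨h2, h1, h3⟩

lemma Face_lt_top (m : ℕ) (i : Fin (m+1) ⊕ Fin (m+1)) (ε : ℝ) (hε : |ε| ≤ 1) :
    μH[2 * (((m+1):ℕ):ℝ) - 1] (Face m i ε) < ∞ := by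
  cases i with
  | inl j => exact Face_inl_lt_top m j ε hε
  | inr j =>
    rw [Face_swap m j ε, IsometryEquiv.hausdorffMeasure_image]
    exact Face_inl_lt_top m j ε hε

lemma rpow_le_one_imp {x a : ℝ} (hx : 0 ≤ x) (ha : 1 ≤ a) (h : x ^ a ≤ 1) : x ≤ 1 := by
  by_contra hc
  push_neg at hc
  have : 1 < x ^ a := (Real.one_lt_rpow_iff_of_pos (by linarith)).2 (Or.inl ⟨hc, by linarith⟩)
  linarith

section Cover
variable {m : ℕ} {a₁ a₂ : ℝ} (ha₁ : 1 ≤ a₁) (ha₂ : 1 ≤ a₂)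

include ha₁ ha₂ in
lemma S2_subset_cover :
    S2 (m+1) a₁ a₂ ⊆ ⋃ (ib : (Fin (m+1) ⊕ Fin (m+1)) × Bool),
      (fun w => radS m a₁ a₂ w • w) '' Face m ib.1 (if ib.2 then (1:ℝ) else -1) := by
  intro p hp
  have hp' : ‖p.1‖ ^ a₁ + ‖p.2‖ ^ a₂ = 1 := hp
  have hpow1 : ‖p.1‖ ^ a₁ ≤ 1 := by
    have := Real.rpow_nonneg (norm_nonneg p.2) a₂; linarith
  have hpow2 : ‖p.2‖ ^ a₂ ≤ 1 := by
    have := Real.rpow_nonneg (norm_nonneg p.1) a₁; linarith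
  have hb1 : ‖p.1‖ ≤ 1 := rpow_le_one_imp (norm_nonneg _) ha₁ hpow1
  have hb2 : ‖p.2‖ ≤ 1 := rpow_le_one_imp (norm_nonneg _) ha₂ hpow2
  set F : (Fin (m+1) ⊕ Fin (m+1)) → ℝ := Sum.elim (fun j => |p.1 j|) (fun j => |p.2 j|) with hF
  obtain ⟨i₀, hmax⟩ := Finite.exists_max F
  set M := F i₀ with hM
  have hM1 : M ≤ 1 := by
    rw [hM]; cases i₀ with
    | inl j => exact le_trans (coord_abs_le_norm p.1 j) hb1
    | inr j => exact le_trans (coord_abs_le_norm p.2 j) hb2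
  have hMpos : 0 < M := by
    by_contra hc
    push_neg at hc
    have hz : ∀ i, F i = 0 := by
      intro i
      have h0 : 0 ≤ F i := by
        rw [hF]; cases i with
        | inl j => exact abs_nonneg _
        | inr j => exact abs_nonneg _
      have := hmax i; linarith
    have hzero1 : ‖p.1‖ = 0 := by
      have := norm_le_sqrt_mul p.1 0 le_rfl (fun j => le_of_eq (hz (Sum.inl j)))
      rw [mul_zero] at this
      linarith [norm_nonneg p.1]
    have hzero2 : ‖p.2‖ = 0 := by
      have := norm_le_sqrt_mul p.2 0 le_rfl (fun j => le_of_eq (hz (Sum.inr j)))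
      rw [mul_zero] at this
      linarith [norm_nonneg p.2]
    rw [hzero1, hzero2, Real.zero_rpow (by linarith), Real.zero_rpow (by linarith)] at hp'
    norm_num at hp'
  set cv : ℝ := Sum.elim (fun j => p.1 j) (fun j => p.2 j) i₀ with hcv
  have hcvabs : |cv| = M := by
    rw [hcv, hM, hF]; cases i₀ with
    | inl j => simp
    | inr j => simp
  set w := M⁻¹ • p with hw
  have hw1 : w.1 = M⁻¹ • p.1 := rfl
  have hw2 : w.2 = M⁻¹ • p.2 := rfl
  have hwc1 : ∀ j, w.1 j = M⁻¹ * p.1 j := by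
    intro j; rw [hw1, PiLp.smul_apply, smul_eq_mul]
  have hwc2 : ∀ j, w.2 j = M⁻¹ * p.2 j := by
    intro j; rw [hw2, PiLp.smul_apply, smul_eq_mul]
  have hMinv : 0 < M⁻¹ := inv_pos.2 hMpos
  have hcube1 : ∀ j, |w.1 j| ≤ 1 := by
    intro j
    rw [hwc1 j, abs_mul, abs_of_nonneg hMinv.le]
    calc M⁻¹ * |p.1 j| ≤ M⁻¹ * M := by
          apply mul_le_mul_of_nonneg_left (hmax (Sum.inl j)) hMinv.le
    _ = 1 := inv_mul_cancel₀ hMpos.ne'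
  have hcube2 : ∀ j, |w.2 j| ≤ 1 := by
    intro j
    rw [hwc2 j, abs_mul, abs_of_nonneg hMinv.le]
    calc M⁻¹ * |p.2 j| ≤ M⁻¹ * M := by
          apply mul_le_mul_of_nonneg_left (hmax (Sum.inr j)) hMinv.le
    _ = 1 := inv_mul_cancel₀ hMpos.ne'
  set ε : ℝ := if 0 ≤ cv then 1 else -1 with hε
  have hεabs : |ε| = 1 := by
    rw [hε]; split <;> simp
  have hwcv : Sum.elim (fun j => w.1 j) (fun j => w.2 j) i₀ = M⁻¹ * cv := by
    rw [hcv]; cases i₀ with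
    | inl j => simp [hwc1 j]
    | inr j => simp [hwc2 j]
  have hface : w ∈ Face m i₀ ε := by
    refine ⟨hcube1, hcube2, ?_⟩
    rw [hwcv, hε]
    by_cases h : 0 ≤ cv
    · rw [if_pos h]
      have : cv = M := by rw [← hcvabs, abs_of_nonneg h]
      rw [this, inv_mul_cancel₀ hMpos.ne']
    · rw [if_neg h]
      push_neg at h
      have : cv = -M := by
        rw [← hcvabs, abs_of_neg h]; ring
      rw [this]
      field_simp
  have hKS : w ∈ KS m := Face_subset_KS hεabs hface
  have hnw1 : M * ‖w.1‖ = ‖p.1‖ := by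
    rw [hw1, norm_smul, Real.norm_eq_abs, abs_of_nonneg hMinv.le, ← mul_assoc,
      mul_inv_cancel₀ hMpos.ne', one_mul]
  have hnw2 : M * ‖w.2‖ = ‖p.2‖ := by
    rw [hw2, norm_smul, Real.norm_eq_abs, abs_of_nonneg hMinv.le, ← mul_assoc,
      mul_inv_cancel₀ hMpos.ne', one_mul]
  have hroot : gS m a₁ a₂ w M = 1 := by
    rw [gS, hnw1, hnw2]; exact hp'
  have hMlo : rlo m ≤ M := by
    by_contra hc
    push_neg at hc
    have hhalf : gS m a₁ a₂ w M ≤ 1/2 := by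
      apply gS_le_half ha₁ ha₂ hKS.2.1 hKS.2.2 hMpos.le
      have : M * NB m < rlo m * NB m := by
        apply mul_lt_mul_of_pos_right hc (NB_pos m)
      rw [rlo] at this
      have hNB := NB_pos m
      calc M * NB m ≤ 1/(4 * NB m) * NB m := by nlinarith
      _ = 1/4 := by field_simp
    rw [hroot] at hhalf; norm_num at hhalf
  have hrad : radS m a₁ a₂ w = M := radS_eq ha₁ ha₂ hKS ⟨hMlo, hM1⟩ hroot
  rw [mem_iUnion]
  refine ⟨(i₀, decide (0 ≤ cv)), ⟨w, ?_, ?_⟩⟩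
  · have : (if (decide (0 ≤ cv) : Bool) then (1:ℝ) else -1) = ε := by
      rw [hε]
      by_cases h : 0 ≤ cv <;> simp [h]
    rw [this]
    exact hface
  · show radS m a₁ a₂ w • w = p
    rw [hrad, hw, smul_smul, mul_inv_cancel₀ hMpos.ne', one_smul]

include ha₁ ha₂ in
lemma S2_hausdorff_lt_top : μH[2 * (((m+1):ℕ):ℝ) - 1] (S2 (m+1) a₁ a₂) < ∞ := by
  set d := 2 * (((m+1):ℕ):ℝ) - 1 with hd
  calc μH[d] (S2 (m+1) a₁ a₂)
      ≤ μH[d] (⋃ (ib : (Fin (m+1) ⊕ Fin (m+1)) × Bool),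
          (fun w => radS m a₁ a₂ w • w) '' Face m ib.1 (if ib.2 then (1:ℝ) else -1)) :=
        measure_mono (S2_subset_cover ha₁ ha₂)
  _ ≤ ∑' (ib : (Fin (m+1) ⊕ Fin (m+1)) × Bool),
        μH[d] ((fun w => radS m a₁ a₂ w • w) '' Face m ib.1 (if ib.2 then (1:ℝ) else -1)) :=
      measure_iUnion_le _
  _ < ∞ := by
      rw [tsum_fintype]
      apply ENNReal.sum_lt_top.2
      intro ib _
      set ε : ℝ := if ib.2 then (1:ℝ) else -1 with hεdef
      have hεabs : |ε| = 1 := by rw [hεdef]; split <;> simp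
      have hface_sub : Face m ib.1 ε ⊆ KS m := Face_subset_KS hεabs
      have hlip := (phi_lipschitzOnWith ha₁ ha₂ (m := m)).mono hface_sub
      have himg := hlip.hausdorffMeasure_image_le (dim_nonneg m)
      calc μH[d] ((fun w => radS m a₁ a₂ w • w) '' Face m ib.1 ε)
          ≤ (Real.toNNReal (LC m a₁ a₂) : ℝ≥0∞) ^ d * μH[d] (Face m ib.1 ε) := himg
      _ < ∞ := ENNReal.mul_lt_top
          (ENNReal.rpow_lt_top_of_nonneg (dim_nonneg m) ENNReal.coe_ne_top)
          (Face_lt_top m ib.1 ε hεabs.le)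
end Cover

lemma lpNormE_one {α : Type*} [MeasurableSpace α] (μ : Measure α) (F : α → ℝ≥0∞) :
    lpNormE μ F 1 = ∫⁻ x, F x ∂μ := by
  rw [lpNormE, if_neg one_ne_zero, if_neg ENNReal.one_ne_top]
  simp

lemma S2_isClosed (n : ℕ) {a₁ a₂ : ℝ} (ha₁ : 1 ≤ a₁) (ha₂ : 1 ≤ a₂) :
    IsClosed (S2 n a₁ a₂) := by
  have hcont : Continuous (fun p : Rn n × Rn n => ‖p.1‖ ^ a₁ + ‖p.2‖ ^ a₂) := by
    apply Continuous.add
    · exact (Real.continuous_rpow_const (by linarith)).comp continuous_fst.norm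
    · exact (Real.continuous_rpow_const (by linarith)).comp continuous_snd.norm
  exact isClosed_eq hcont continuous_const

lemma main_failure (m : ℕ) {a₁ a₂ : ℝ} (ha₁ : 1 ≤ a₁) (ha₂ : 1 ≤ a₂) :
    ¬ ∃ C : ℝ≥0, ∀ f g : Rn (m+1) → ℝ, MemLp f 1 volume → MemLp g ∞ volume →
      lpNormE volume (biMaxOne (m+1) a₁ a₂ f g) 1 ≤
        C * eLpNorm f 1 volume * eLpNorm g ∞ volume := by
  rintro ⟨C, hC⟩
  set S := S2 (m+1) a₁ a₂ with hSdef
  have hSmeas : MeasurableSet S := (S2_isClosed (m+1) ha₁ ha₂).measurableSet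
  obtain ⟨capc, hcapc, hcap⟩ := cap_lower m ha₁ ha₂
  set c := μH[2 * (((m+1):ℕ):ℝ) - 1] S with hcdef
  have hc_top : c < ∞ := S2_hausdorff_lt_top ha₁ ha₂
  have hc_pos : 0 < c := by
    have hv : ‖(EuclideanSpace.single 0 (1/2 : ℝ) : Rn (m+1))‖ ≤ 1/2 := by
      rw [EuclideanSpace.norm_single]; norm_num
    have h := hcap _ hv (1/4) (by norm_num) le_rfl
    calc (0:ℝ≥0∞) < ENNReal.ofReal (capc * (1/4)^(m+1)) := ENNReal.ofReal_pos.2 (by positivity)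
    _ ≤ μH[2 * (((m+1):ℕ):ℝ) - 1]
        {p : Rn (m+1) × Rn (m+1) | p ∈ S ∧ ‖p.1 - EuclideanSpace.single 0 (1/2:ℝ)‖ ≤ 1/4} := h
    _ ≤ c := measure_mono (fun p hp => hp.1)
  -- the counterexample functions
  set f : Rn (m+1) → ℝ := (closedBall (0:Rn (m+1)) 1).indicator (fun _ => (1:ℝ)) with hfdef
  set g : Rn (m+1) → ℝ := fun _ => (1:ℝ) with hgdef
  have hf : MemLp f 1 volume :=
    memLp_indicator_const 1 measurableSet_closedBall 1 (Or.inr measure_closedBall_lt_top.ne)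
  have hg : MemLp g ∞ volume := memLp_top_const 1
  -- the measure identity for μS2
  have hμS2_apply : ∀ A : Set (Rn (m+1) × Rn (m+1)), MeasurableSet A →
      μS2 (m+1) a₁ a₂ A = c⁻¹ * μH[2 * (((m+1):ℕ):ℝ) - 1] (A ∩ S) := by
    intro A hA
    rw [μS2, Measure.smul_apply, Measure.restrict_apply hA, smul_eq_mul]
  -- pointwise lower bound
  have hpoint : ∀ x : Rn (m+1), 2 ≤ ‖x‖ →
      c⁻¹ * ENNReal.ofReal (capc * ((2*‖x‖)⁻¹)^(m+1)) ≤ biMaxOne (m+1) a₁ a₂ f g x := by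
    intro x hx
    have hxpos : (0:ℝ) < ‖x‖ := by linarith
    set t := 2*‖x‖ with htdef
    have ht : 0 < t := by positivity
    set v : Rn (m+1) := t⁻¹ • x with hvdef
    have hvnorm : ‖v‖ = 1/2 := by
      rw [hvdef, norm_smul, Real.norm_eq_abs, abs_of_nonneg (inv_pos.2 ht).le, htdef]
      field_simp
    set Sset := {p : Rn (m+1) × Rn (m+1) | ‖x - t • p.1‖ ≤ 1} with hSsetdef
    have hSsetMeas : MeasurableSet Sset := by
      have : IsClosed Sset :=
        isClosed_le (Continuous.norm (continuous_const.sub (continuous_fst.const_smul t)))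
          continuous_const
      exact this.measurableSet
    have htv : t • v = x := by
      rw [hvdef, smul_smul, mul_inv_cancel₀ ht.ne', one_smul]
    -- the average equals the measure of Sset
    have havg : biAvg (m+1) a₁ a₂ f g t t x = (μS2 (m+1) a₁ a₂ Sset).toReal := by
      rw [biAvg]
      have hint : ∀ p : Rn (m+1) × Rn (m+1),
          f (x - t • p.1) * g (x - t • p.2) = Sset.indicator (fun _ => (1:ℝ)) p := by
        intro p
        rw [hgdef, hfdef]
        by_cases hp : p ∈ Sset
        · rw [Set.indicator_of_mem hp, Set.indicator_of_mem (by
            rw [mem_closedBall_zero_iff]; exact hp)]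
          norm_num
        · rw [Set.indicator_of_notMem hp, Set.indicator_of_notMem (by
            rw [mem_closedBall_zero_iff]; exact hp), zero_mul]
      rw [integral_congr_ae (ae_of_all _ hint), integral_indicator_const (1:ℝ) hSsetMeas]
      simp
      rfl
    -- the measure is finite
    have hμle_one : μS2 (m+1) a₁ a₂ Sset ≤ 1 := by
      rw [hμS2_apply Sset hSsetMeas]
      calc c⁻¹ * μH[2 * (((m+1):ℕ):ℝ) - 1] (Sset ∩ S) ≤ c⁻¹ * c := by
            apply mul_le_mul_right
            exact measure_mono inter_subset_right
      _ = 1 := ENNReal.inv_mul_cancel hc_pos.ne' hc_top.ne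
    -- lower bound on the measure
    have hμlow : c⁻¹ * ENNReal.ofReal (capc * ((2*‖x‖)⁻¹)^(m+1)) ≤ μS2 (m+1) a₁ a₂ Sset := by
      rw [hμS2_apply Sset hSsetMeas]
      apply mul_le_mul_right
      have hsub : {p : Rn (m+1) × Rn (m+1) | p ∈ S ∧ ‖p.1 - v‖ ≤ t⁻¹} ⊆ Sset ∩ S := by
        rintro p ⟨hpS, hpv⟩
        refine ⟨?_, hpS⟩
        show ‖x - t • p.1‖ ≤ 1
        calc ‖x - t • p.1‖ = ‖t • (v - p.1)‖ := by rw [smul_sub, htv]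
        _ = t * ‖v - p.1‖ := by
            rw [norm_smul, Real.norm_eq_abs, abs_of_nonneg ht.le]
        _ ≤ t * t⁻¹ := mul_le_mul_of_nonneg_left (by
            rw [show v - p.1 = -(p.1 - v) by abel, norm_neg]; exact hpv) ht.le
        _ = 1 := mul_inv_cancel₀ ht.ne'
      calc ENNReal.ofReal (capc * ((2*‖x‖)⁻¹)^(m+1))
          ≤ μH[2 * (((m+1):ℕ):ℝ) - 1]
              {p : Rn (m+1) × Rn (m+1) | p ∈ S ∧ ‖p.1 - v‖ ≤ t⁻¹} := by
            have := hcap v hvnorm.le t⁻¹ (inv_pos.2 ht) (by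
              rw [htdef]
              rw [inv_le_comm₀ (by positivity) (by norm_num)]
              linarith)
            rw [htdef] at this
            exact this
      _ ≤ μH[2 * (((m+1):ℕ):ℝ) - 1] (Sset ∩ S) := measure_mono hsub
    -- conclude
    have hbi : ENNReal.ofReal |biAvg (m+1) a₁ a₂ f g t t x| ≤ biMaxOne (m+1) a₁ a₂ f g x := by
      apply le_biSup (f := fun t => ENNReal.ofReal |biAvg (m+1) a₁ a₂ f g t t x|)
      exact mem_Ioi.2 ht
    calc c⁻¹ * ENNReal.ofReal (capc * ((2*‖x‖)⁻¹)^(m+1)) ≤ μS2 (m+1) a₁ a₂ Sset := hμlow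
    _ = ENNReal.ofReal |biAvg (m+1) a₁ a₂ f g t t x| := by
        rw [havg, abs_of_nonneg ENNReal.toReal_nonneg,
          ENNReal.ofReal_toReal (lt_of_le_of_lt hμle_one ENNReal.one_lt_top).ne]
    _ ≤ biMaxOne (m+1) a₁ a₂ f g x := hbi
  -- annuli
  set B := volume (ball (0 : Rn (m+1)) 1) with hBdef
  have hB_pos : 0 < B := measure_ball_pos volume 0 one_pos
  have hB_top : B < ∞ := measure_ball_lt_top
  set A : ℕ → Set (Rn (m+1)) := fun k => ball 0 (2^(k+2)) \ ball 0 (2^(k+1)) with hAdef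
  have hAmeas : ∀ k, MeasurableSet (A k) := fun k =>
    measurableSet_ball.diff measurableSet_ball
  have hAdisj : Pairwise (Function.onFun Disjoint A) := by
    have key : ∀ k l, k < l → Disjoint (A k) (A l) := by
      intro k l hkl
      rw [Set.disjoint_left]
      intro x hxk hxl
      have h1 : ‖x‖ < 2^(k+2) := by
        have := hxk.1; rwa [mem_ball_zero_iff] at this
      have h2 : ¬ ‖x‖ < 2^(l+1) := by
        have := hxl.2; rwa [mem_ball_zero_iff] at this
      have : (2:ℝ)^(k+2) ≤ 2^(l+1) := by
        apply pow_le_pow_right₀ (by norm_num)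
        omega
      exact h2 (by linarith)
    intro k l hkl
    rcases lt_or_gt_of_ne hkl with h | h
    · exact key k l h
    · exact (key l k h).symm
  -- uniform positive lower bound for each annulus integral
  set ι₀ := c⁻¹ * ENNReal.ofReal (capc * ((4:ℝ)⁻¹)^(m+1)) * B with hι₀def
  have hι₀_pos : 0 < ι₀ := by
    rw [hι₀def]
    apply ENNReal.mul_pos _ hB_pos.ne'
    exact (ENNReal.mul_pos (ENNReal.inv_pos.2 hc_top.ne).ne'
      (ENNReal.ofReal_pos.2 (by positivity)).ne').ne'
  have hannulus : ∀ k : ℕ, ι₀ ≤ ∫⁻ x in A k, biMaxOne (m+1) a₁ a₂ f g x ∂volume := by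
    intro k
    -- constants
    set εk := c⁻¹ * ENNReal.ofReal (capc * (((2:ℝ)^(k+3))⁻¹)^(m+1)) with hεkdef
    set Xk := ENNReal.ofReal (((2:ℝ)^(k+1))^(m+1)) * B with hXkdef
    -- pointwise bound on A k
    have hpt : ∀ x ∈ A k, εk ≤ biMaxOne (m+1) a₁ a₂ f g x := by
      intro x hxk
      have h1 : ‖x‖ < 2^(k+2) := by
        have := hxk.1; rwa [mem_ball_zero_iff] at this
      have h2 : (2:ℝ)^(k+1) ≤ ‖x‖ := by
        have := hxk.2; rw [mem_ball_zero_iff] at this; linarith [not_lt.1 this]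
      have hx2 : 2 ≤ ‖x‖ := by
        calc (2:ℝ) = 2^1 := (pow_one 2).symm
        _ ≤ 2^(k+1) := pow_le_pow_right₀ (by norm_num) (by omega)
        _ ≤ ‖x‖ := h2
      refine le_trans ?_ (hpoint x hx2)
      rw [hεkdef]
      apply mul_le_mul_right
      apply ENNReal.ofReal_le_ofReal
      apply mul_le_mul_of_nonneg_left _ hcapc.le
      apply pow_le_pow_left₀ (by positivity)
      rw [inv_le_inv₀ (by positivity) (by positivity)]
      calc 2*‖x‖ ≤ 2*(2:ℝ)^(k+2) := by linarith
      _ = 2^(k+3) := by ring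
    -- volume of annulus
    have hvolA : Xk ≤ volume (A k) := by
      have hball : ∀ r : ℕ, volume (ball (0:Rn (m+1)) ((2:ℝ)^r)) =
          ENNReal.ofReal (((2:ℝ)^r)^(m+1)) * B := by
        intro r
        rw [hBdef, Measure.addHaar_ball volume 0 (by positivity : (0:ℝ) ≤ 2^r)]
        congr 2
        rw [finrank_euclideanSpace_fin]
      have hXk_top : Xk ≠ ∞ :=
        (ENNReal.mul_lt_top ENNReal.ofReal_lt_top hB_top).ne
      have hsum : Xk + Xk ≤ volume (ball (0:Rn (m+1)) (2^(k+2))) := by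
        rw [hball (k+2), hXkdef]
        rw [← two_mul, ← mul_assoc, ← ENNReal.ofReal_ofNat, ← ENNReal.ofReal_mul (by norm_num)]
        apply mul_le_mul_left
        apply ENNReal.ofReal_le_ofReal
        calc 2 * ((2:ℝ)^(k+1))^(m+1) ≤ 2^(m+1) * ((2:ℝ)^(k+1))^(m+1) := by
              apply mul_le_mul_of_nonneg_right _ (by positivity)
              calc (2:ℝ) = 2^1 := (pow_one 2).symm
              _ ≤ 2^(m+1) := pow_le_pow_right₀ (by norm_num) (by omega)
        _ = ((2:ℝ)^(k+2))^(m+1) := by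
              rw [← mul_pow]
              congr 1
              ring
      calc Xk = (Xk + Xk) - Xk := by
            rw [ENNReal.add_sub_cancel_right hXk_top]
      _ ≤ volume (ball (0:Rn (m+1)) (2^(k+2))) - volume (ball (0:Rn (m+1)) (2^(k+1))) := by
            apply tsub_le_tsub hsum
            rw [hball (k+1), hXkdef]
      _ ≤ volume (A k) := le_measure_diff
    -- the key product identity
    have hprod : ι₀ = εk * Xk := by
      rw [hι₀def, hεkdef, hXkdef, mul_assoc, mul_assoc]
      congr 1
      rw [← mul_assoc, ← ENNReal.ofReal_mul (by positivity)]
      congr 2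
      rw [mul_assoc, ← mul_pow]
      congr 2
      rw [show (2:ℝ)^(k+3) = 2^(k+1) * 4 by ring]
      field_simp
    calc ι₀ = εk * Xk := hprod
    _ ≤ εk * volume (A k) := mul_le_mul_right hvolA _
    _ = ∫⁻ _x in A k, εk ∂volume := by rw [setLIntegral_const, mul_comm]
    _ ≤ ∫⁻ x in A k, biMaxOne (m+1) a₁ a₂ f g x ∂volume := by
        apply lintegral_mono_ae
        rw [ae_restrict_iff' (hAmeas k)]
        exact ae_of_all _ hpt
  -- total integral is infinite
  have htot : lpNormE volume (biMaxOne (m+1) a₁ a₂ f g) 1 = ∞ := by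
    rw [lpNormE_one]
    rw [eq_top_iff]
    calc (⊤:ℝ≥0∞) = ∑' _k : ℕ, ι₀ := (ENNReal.tsum_const_eq_top_of_ne_zero hι₀_pos.ne').symm
    _ ≤ ∑' k : ℕ, ∫⁻ x in A k, biMaxOne (m+1) a₁ a₂ f g x ∂volume :=
        ENNReal.tsum_le_tsum hannulus
    _ = ∫⁻ x in ⋃ k, A k, biMaxOne (m+1) a₁ a₂ f g x ∂volume :=
        (lintegral_iUnion hAmeas hAdisj _).symm
    _ ≤ ∫⁻ x, biMaxOne (m+1) a₁ a₂ f g x ∂volume := setLIntegral_le_lintegral _ _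
  -- contradiction
  have hfin : C * eLpNorm f 1 volume * eLpNorm g ∞ volume < ∞ := by
    apply ENNReal.mul_lt_top
    · exact ENNReal.mul_lt_top ENNReal.coe_lt_top hf.2
    · exact hg.2
  have := hC f g hf hg
  rw [htot] at this
  exact absurd (lt_of_le_of_lt this hfin) (lt_irrefl _)

def eSwap2 (n : ℕ) : (Rn n × Rn n) ≃ᵢ (Rn n × Rn n) where
  toEquiv := Equiv.prodComm _ _
  isometry_toFun := by
    intro p q
    show edist (p.2, p.1) (q.2, q.1) = edist p q
    rw [Prod.edist_eq, Prod.edist_eq]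
    exact max_comm _ _

lemma eSwap2_preimage (n : ℕ) (a₁ a₂ : ℝ) :
    (eSwap2 n) ⁻¹' (S2 n a₁ a₂) = S2 n a₂ a₁ := by
  ext p
  show ‖p.2‖ ^ a₁ + ‖p.1‖ ^ a₂ = 1 ↔ ‖p.1‖ ^ a₂ + ‖p.2‖ ^ a₁ = 1
  constructor <;> intro h <;> linarith

lemma μS2_swap (n : ℕ) {a₁ a₂ : ℝ} (ha₁ : 1 ≤ a₁) (ha₂ : 1 ≤ a₂) :
    Measure.map (eSwap2 n) (μS2 n a₂ a₁) = μS2 n a₁ a₂ := by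
  have hSmeas : MeasurableSet (S2 n a₁ a₂) := (S2_isClosed n ha₁ ha₂).measurableSet
  have hmp := (eSwap2 n).measurePreserving_hausdorffMeasure (2 * (n : ℝ) - 1)
  have hres : Measure.map (eSwap2 n)
      ((μH[(2 * (n : ℝ) - 1)]).restrict ((eSwap2 n) ⁻¹' (S2 n a₁ a₂)))
      = (μH[(2 * (n : ℝ) - 1)]).restrict (S2 n a₁ a₂) :=
    (hmp.restrict_preimage hSmeas).map_eq
  have hceq : μH[(2 * (n : ℝ) - 1)] (S2 n a₂ a₁) = μH[(2 * (n : ℝ) - 1)] (S2 n a₁ a₂) := by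
    rw [← eSwap2_preimage n a₁ a₂]
    exact hmp.measure_preimage hSmeas.nullMeasurableSet
  rw [μS2, μS2, ← eSwap2_preimage n a₁ a₂, Measure.map_smul, hres,
    eSwap2_preimage n a₁ a₂, hceq]

lemma biAvg_swap (n : ℕ) {a₁ a₂ : ℝ} (ha₁ : 1 ≤ a₁) (ha₂ : 1 ≤ a₂)
    (f g : Rn n → ℝ) (t₁ t₂ : ℝ) (x : Rn n) :
    biAvg n a₁ a₂ f g t₁ t₂ x = biAvg n a₂ a₁ g f t₂ t₁ x := by
  rw [biAvg, biAvg, ← μS2_swap n ha₁ ha₂]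
  rw [show Measure.map (eSwap2 n) (μS2 n a₂ a₁)
    = Measure.map ((eSwap2 n).toHomeomorph.toMeasurableEquiv) (μS2 n a₂ a₁) from rfl]
  rw [MeasureTheory.integral_map_equiv]
  apply integral_congr_ae
  apply ae_of_all
  intro p
  show f (x - t₁ • p.2) * g (x - t₂ • p.1) = g (x - t₂ • p.1) * f (x - t₁ • p.2)
  ring

lemma biMaxOne_swap (n : ℕ) {a₁ a₂ : ℝ} (ha₁ : 1 ≤ a₁) (ha₂ : 1 ≤ a₂) (f g : Rn n → ℝ) :
    biMaxOne n a₁ a₂ f g = biMaxOne n a₂ a₁ g f := by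
  funext x
  rw [biMaxOne, biMaxOne]
  apply iSup_congr
  intro t
  apply iSup_congr
  intro _
  rw [biAvg_swap n ha₁ ha₂]

/-- The one-parameter bilinear maximal operator `𝔐̃^𝐚` is not bounded from
`L¹ × L^∞ → L¹`, nor from `L^∞ × L¹ → L¹`. -/
theorem bilinear_maximal_degenerate_surface_L1_failure
    (n : ℕ) (hn : 2 ≤ n) (a₁ a₂ : ℝ) (ha₁ : 1 ≤ a₁) (ha₂ : 1 ≤ a₂) :
    (¬ ∃ C : ℝ≥0, ∀ f g : Rn n → ℝ, MemLp f 1 volume → MemLp g ∞ volume →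
      lpNormE volume (biMaxOne n a₁ a₂ f g) 1 ≤ C * eLpNorm f 1 volume * eLpNorm g ∞ volume) ∧
    (¬ ∃ C : ℝ≥0, ∀ f g : Rn n → ℝ, MemLp f ∞ volume → MemLp g 1 volume →
      lpNormE volume (biMaxOne n a₁ a₂ f g) 1 ≤ C * eLpNorm f ∞ volume * eLpNorm g 1 volume) := by
  obtain ⟨m, rfl⟩ : ∃ m, n = m + 1 := ⟨n - 1, by omega⟩
  constructor
  · exact main_failure m ha₁ ha₂
  · rintro ⟨C, hC⟩
    apply main_failure m ha₂ ha₁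
    refine ⟨C, fun f g hf hg => ?_⟩
    have hswap : biMaxOne (m+1) a₂ a₁ f g = biMaxOne (m+1) a₁ a₂ g f :=
      biMaxOne_swap (m+1) ha₂ ha₁ f g
    rw [hswap]
    calc lpNormE volume (biMaxOne (m+1) a₁ a₂ g f) 1
        ≤ C * eLpNorm g ∞ volume * eLpNorm f 1 volume := hC g f hg hf
    _ = C * eLpNorm f 1 volume * eLpNorm g ∞ volume := by ring
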